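/- arXiv:1704.00743 — 4 statements merged into one kernel-verified Lean document; each statement's English description precedes it below -/
import Mathlib

section
/- Let X : ℝ × ℝ → ℝ^d be a smooth map with X(t,s+1) = X(t,s) + N for a fixed N ∈ ℤ^d, let v : ℝ × ℝ^d → ℝ^d be smooth with ∂_t X(t,s) = v(t, X(t,s)) for all (t,s), and let β : ℝ^d → ℝ^d be a smooth ℤ^d-periodic vector field. Then for every t, d/dt ∫₀¹ β(X(t,s)) · ∂_s X(t,s) ds = ∫₀¹ (∂_j β_i)(X(t,s)) ( v^j(t,X(t,s)) ∂_s X^i(t,s) − ∂_s X^j(t,s) v^i(t,X(t,s)) ) ds (summation over repeated indices i,j ∈ {1,…,d}). In other words, the distribution-valued field B(t) defined by the loop satisfies the induction equation ∂_t B + ∇·(B⊗v − v⊗B) = 0 in the sense of distributions. -/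
open MeasureTheory intervalIntegral

noncomputable section

/-- Spatial partial derivative `∂_j f` of a scalar function on `ℝ^d`. -/
def pd {d : ℕ} (j : Fin d) (f : (Fin d → ℝ) → ℝ) (x : Fin d → ℝ) : ℝ :=
  fderiv ℝ f x (Pi.single j 1)

/-- decomposition of a vector in `ℝ^d` along the canonical basis -/
lemma pi_single_decomp {d : ℕ} (w : Fin d → ℝ) :
    w = ∑ j, w j • (Pi.single j 1 : Fin d → ℝ) := by
  funext k
  simp [Pi.single_apply]

/-- applying a continuous linear map coordinatewise via partial sums -/
lemma clm_apply_sum {d : ℕ} (L : (Fin d → ℝ) →L[ℝ] (Fin d → ℝ)) (w : Fin d → ℝ) (i : Fin d) :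
    L w i = ∑ j, w j * L (Pi.single j 1) i := by
  conv_lhs => rw [pi_single_decomp w, map_sum]
  simp [Finset.sum_apply]

/-- For a smooth moving loop `X` transported by a smooth velocity
field `v` (`∂_t X(t,s) = v(t, X(t,s))`) and a smooth `ℤ^d`-periodic trial field `β`,
`d/dt ∫₀¹ β(X)·∂_s X ds = ∫₀¹ ∂_j β_i(X) (v^j(t,X) ∂_s X^i − ∂_s X^j v^i(t,X)) ds`:
the loop-generated field `B` solves the induction equation
`∂_t B + ∇·(B⊗v − v⊗B) = 0` in the sense of distributions. -/
theorem stmt_2 (d : ℕ) (X : ℝ → ℝ → Fin d → ℝ) (N : Fin d → ℤ)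
    (v : ℝ → (Fin d → ℝ) → Fin d → ℝ) (β : (Fin d → ℝ) → Fin d → ℝ)
    (hX : ContDiff ℝ (⊤ : ℕ∞) (fun p : ℝ × ℝ => X p.1 p.2))
    (hv : ContDiff ℝ (⊤ : ℕ∞) (fun p : ℝ × (Fin d → ℝ) => v p.1 p.2))
    (hβ : ContDiff ℝ (⊤ : ℕ∞) β)
    (hper : ∀ t s : ℝ, X t (s + 1) = X t s + fun i => (N i : ℝ))
    (hβper : ∀ (x : Fin d → ℝ) (k : Fin d → ℤ), β (x + fun i => (k i : ℝ)) = β x)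
    (hflow : ∀ (t s : ℝ) (i : Fin d), deriv (fun τ => X τ s i) t = v t (X t s) i) :
    ∀ t : ℝ, HasDerivAt
      (fun τ => ∫ s in (0:ℝ)..1, ∑ i, β (X τ s) i * deriv (fun σ => X τ σ i) s)
      (∫ s in (0:ℝ)..1, ∑ i, ∑ j, pd j (fun x => β x i) (X t s) *
        (v t (X t s) j * deriv (fun σ => X t σ i) s
          - deriv (fun σ => X t σ j) s * v t (X t s) i)) t := by
  intro t
  classical
  set Y : ℝ × ℝ → Fin d → ℝ := fun p => X p.1 p.2 with hYdef
  have hYd : ContDiff ℝ (⊤ : ℕ∞) Y := hX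
  have hY1 : ContDiff ℝ (⊤ : ℕ∞) (fun p => fderiv ℝ Y p) := hYd.fderiv_right (by simp)
  have hY2 : ContDiff ℝ (⊤ : ℕ∞) (fun p => fderiv ℝ (fun q => fderiv ℝ Y q) p) :=
    hY1.fderiv_right (by simp)
  have hYdiff : ∀ p, HasFDerivAt Y (fderiv ℝ Y p) p :=
    fun p => (hYd.differentiable (by simp) p).hasFDerivAt
  have hY1diff : ∀ p, HasFDerivAt (fun q => fderiv ℝ Y q)
      (fderiv ℝ (fun q => fderiv ℝ Y q) p) p :=
    fun p => (hY1.differentiable (by simp) p).hasFDerivAt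
  have hsymm : ∀ (p : ℝ × ℝ) (a b : ℝ × ℝ),
      fderiv ℝ (fun q => fderiv ℝ Y q) p a b = fderiv ℝ (fun q => fderiv ℝ Y q) p b a :=
    fun p a b => second_derivative_symmetric hYdiff (hY1diff p) a b
  set Xs : ℝ × ℝ → Fin d → ℝ := fun p => fderiv ℝ Y p (0, 1) with hXsdef
  set Xt : ℝ × ℝ → Fin d → ℝ := fun p => fderiv ℝ Y p (1, 0) with hXtdef
  have hXsc : Continuous Xs := (hY1.continuous).clm_apply continuous_const
  have hXtc : Continuous Xt := (hY1.continuous).clm_apply continuous_const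
  have hYc : Continuous Y := hYd.continuous
  have hβc : Continuous β := hβ.continuous
  have hDβ1 : ContDiff ℝ (⊤ : ℕ∞) (fun x => fderiv ℝ β x) := hβ.fderiv_right (by simp)
  have hDβc : Continuous (fun x => fderiv ℝ β x) := hDβ1.continuous
  have hβdiff : ∀ x, HasFDerivAt β (fderiv ℝ β x) x :=
    fun x => (hβ.differentiable (by simp) x).hasFDerivAt
  -- slice derivatives
  have hA : ∀ (τ s : ℝ), HasDerivAt (fun σ => Y (τ, σ)) (Xs (τ, s)) s := by
    intro τ s
    have h1 : HasDerivAt (fun σ : ℝ => ((τ, σ) : ℝ × ℝ)) ((0 : ℝ), (1 : ℝ)) s :=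
      (hasDerivAt_const s τ).prodMk (hasDerivAt_id s)
    exact (hYdiff (τ, s)).comp_hasDerivAt s h1
  have hAi : ∀ (τ s : ℝ) (i : Fin d), HasDerivAt (fun σ => X τ σ i) (Xs (τ, s) i) s := by
    intro τ s i
    exact (ContinuousLinearMap.proj (R := ℝ) (φ := fun _ : Fin d => ℝ)
      i).hasFDerivAt.comp_hasDerivAt s (hA τ s)
  have hB : ∀ (τ s : ℝ), HasDerivAt (fun σ => Y (σ, s)) (Xt (τ, s)) τ := by
    intro τ s
    have h1 : HasDerivAt (fun σ : ℝ => ((σ, s) : ℝ × ℝ)) ((1 : ℝ), (0 : ℝ)) τ :=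
      (hasDerivAt_id τ).prodMk (hasDerivAt_const τ s)
    exact (hYdiff (τ, s)).comp_hasDerivAt τ h1
  have hBi : ∀ (τ s : ℝ) (i : Fin d), HasDerivAt (fun σ => X σ s i) (Xt (τ, s) i) τ := by
    intro τ s i
    exact (ContinuousLinearMap.proj (R := ℝ) (φ := fun _ : Fin d => ℝ)
      i).hasFDerivAt.comp_hasDerivAt τ (hB τ s)
  have hXtv : ∀ (τ s : ℝ), Xt (τ, s) = v τ (X τ s) := by
    intro τ s; funext i
    rw [← (hBi τ s i).deriv, hflow τ s i]
  -- derivative of Xs slice in the t-direction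
  have hC : ∀ (τ s : ℝ), HasDerivAt (fun σ => fderiv ℝ Y (σ, s))
      (fderiv ℝ (fun q => fderiv ℝ Y q) (τ, s) (1, 0)) τ := by
    intro τ s
    have h1 : HasDerivAt (fun σ : ℝ => ((σ, s) : ℝ × ℝ)) ((1 : ℝ), (0 : ℝ)) τ :=
      (hasDerivAt_id τ).prodMk (hasDerivAt_const τ s)
    exact (hY1diff (τ, s)).comp_hasDerivAt τ h1
  have hCi : ∀ (τ s : ℝ) (i : Fin d), HasDerivAt (fun σ => Xs (σ, s) i)
      (fderiv ℝ (fun q => fderiv ℝ Y q) (τ, s) (1, 0) (0, 1) i) τ := by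
    intro τ s i
    have h2 := ((ContinuousLinearMap.proj (R := ℝ) (φ := fun _ : Fin d => ℝ) i).comp
      (ContinuousLinearMap.apply ℝ (Fin d → ℝ) ((0 : ℝ), (1 : ℝ)))).hasFDerivAt.comp_hasDerivAt
      τ (hC τ s)
    exact h2
  -- derivative of Xt slice in the s-direction
  have hD : ∀ (τ s : ℝ), HasDerivAt (fun σ => fderiv ℝ Y (τ, σ))
      (fderiv ℝ (fun q => fderiv ℝ Y q) (τ, s) (0, 1)) s := by
    intro τ s
    have h1 : HasDerivAt (fun σ : ℝ => ((τ, σ) : ℝ × ℝ)) ((0 : ℝ), (1 : ℝ)) s :=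
      (hasDerivAt_const s τ).prodMk (hasDerivAt_id s)
    exact (hY1diff (τ, s)).comp_hasDerivAt s h1
  have hDi : ∀ (τ s : ℝ) (i : Fin d), HasDerivAt (fun σ => Xt (τ, σ) i)
      (fderiv ℝ (fun q => fderiv ℝ Y q) (τ, s) (0, 1) (1, 0) i) s := by
    intro τ s i
    exact ((ContinuousLinearMap.proj (R := ℝ) (φ := fun _ : Fin d => ℝ) i).comp
      (ContinuousLinearMap.apply ℝ (Fin d → ℝ) ((1 : ℝ), (0 : ℝ)))).hasFDerivAt.comp_hasDerivAt
      s (hD τ s)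
  -- the integrand and its t-derivative
  set G : ℝ × ℝ → ℝ := fun p => ∑ i, β (Y p) i * Xs p i with hGdef
  set H : ℝ × ℝ → ℝ := fun p => ∑ i,
      (fderiv ℝ β (Y p) (Xt p) i * Xs p i
        + β (Y p) i * fderiv ℝ (fun q => fderiv ℝ Y q) p (1, 0) (0, 1) i) with hHdef
  have hGc : Continuous G := by
    apply continuous_finset_sum
    intro i _
    exact ((continuous_apply i).comp (hβc.comp hYc)).mul ((continuous_apply i).comp hXsc)
  have hHc : Continuous H := by
    apply continuous_finset_sum
    intro i _
    apply Continuous.add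
    · exact ((continuous_apply i).comp ((hDβc.comp hYc).clm_apply hXtc)).mul
        ((continuous_apply i).comp hXsc)
    · exact ((continuous_apply i).comp (hβc.comp hYc)).mul
        ((continuous_apply i).comp
          ((hY2.continuous.clm_apply continuous_const).clm_apply continuous_const))
  have hGderiv : ∀ (τ s : ℝ), HasDerivAt (fun x => G (x, s)) (H (τ, s)) τ := by
    intro τ s
    apply HasDerivAt.fun_sum
    intro i _
    have c1 : HasDerivAt (fun x => β (Y (x, s)) i)
        (fderiv ℝ β (Y (τ, s)) (Xt (τ, s)) i) τ := by
      have := ((ContinuousLinearMap.proj (R := ℝ) (φ := fun _ : Fin d => ℝ) i).hasFDerivAt.comp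
        (Y (τ, s)) (hβdiff (Y (τ, s)))).comp_hasDerivAt τ (hB τ s)
      exact this
    exact c1.mul (hCi τ s i)
  -- rewrite the integrand function
  have hfun : (fun τ => ∫ s in (0:ℝ)..1, ∑ i, β (X τ s) i * deriv (fun σ => X τ σ i) s)
      = fun τ => ∫ s in (0:ℝ)..1, G (τ, s) := by
    funext τ
    apply intervalIntegral.integral_congr
    intro s _
    apply Finset.sum_congr rfl
    intro i _
    rw [(hAi τ s i).deriv]
  -- differentiation under the integral sign
  obtain ⟨C, hC⟩ := (isCompact_Icc (a := t - 1) (b := t + 1)).prod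
    (isCompact_uIcc (a := (0:ℝ)) (b := 1)) |>.exists_bound_of_continuousOn hHc.continuousOn
  have key : HasDerivAt (fun x => ∫ s in (0:ℝ)..1, G (x, s)) (∫ s in (0:ℝ)..1, H (t, s)) t := by
    have := intervalIntegral.hasDerivAt_integral_of_dominated_loc_of_deriv_le
      (F := fun x s => G (x, s)) (F' := fun x s => H (x, s)) (x₀ := t)
      (bound := fun _ => C) (a := 0) (b := 1) (μ := volume) (s := Metric.ball t 1) (Metric.ball_mem_nhds t one_pos)
      ?_ ?_ ?_ ?_ ?_ ?_
    · exact this.2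
    · filter_upwards with x
      exact (hGc.comp (continuous_const.prodMk continuous_id)).aestronglyMeasurable
    · exact ((hGc.comp (continuous_const.prodMk continuous_id))).intervalIntegrable 0 1
    · exact (hHc.comp (continuous_const.prodMk continuous_id)).aestronglyMeasurable
    · filter_upwards with s hs x hx
      apply hC
      constructor
      · simp only [Metric.mem_ball, Real.dist_eq] at hx
        constructor <;> [linarith [abs_lt.mp hx |>.1]; linarith [abs_lt.mp hx |>.2]]
      · exact Set.uIoc_subset_uIcc hs
    · exact intervalIntegrable_const
    · filter_upwards with s hs x hx
      exact hGderiv x s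
  rw [hfun]
  -- it remains to identify the two integrals
  have hval : (∫ s in (0:ℝ)..1, ∑ i, ∑ j, pd j (fun x => β x i) (X t s) *
      (v t (X t s) j * deriv (fun σ => X t σ i) s
        - deriv (fun σ => X t σ j) s * v t (X t s) i))
      = ∫ s in (0:ℝ)..1, H (t, s) := by
    -- expansion of the full derivative of β in the coordinate basis
    have hfd : ∀ (x w : Fin d → ℝ) (i : Fin d),
        fderiv ℝ β x w i = ∑ j, pd j (fun y => β y i) x * w j := by
      intro x w i
      have hpd : ∀ j : Fin d, pd j (fun y => β y i) x = fderiv ℝ β x (Pi.single j 1) i := by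
        intro j
        have h1 : HasFDerivAt (fun y => β y i)
            ((ContinuousLinearMap.proj (R := ℝ) (φ := fun _ : Fin d => ℝ) i).comp
              (fderiv ℝ β x)) x :=
          (ContinuousLinearMap.proj (R := ℝ) (φ := fun _ : Fin d => ℝ) i).hasFDerivAt.comp x
            (hβdiff x)
        rw [pd, h1.fderiv]; rfl
      rw [clm_apply_sum (fderiv ℝ β x) w i]
      exact Finset.sum_congr rfl fun j _ => by rw [hpd j]; ring
    set P1 : ℝ → ℝ := fun s => ∑ i, fderiv ℝ β (X t s) (Xt (t, s)) i * Xs (t, s) i with hP1def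
    set P2 : ℝ → ℝ := fun s =>
      ∑ i, β (X t s) i * fderiv ℝ (fun q => fderiv ℝ Y q) (t, s) (1, 0) (0, 1) i with hP2def
    set Q : ℝ → ℝ := fun s => ∑ i, fderiv ℝ β (X t s) (Xs (t, s)) i * Xt (t, s) i with hQdef
    have cq : Continuous (fun s : ℝ => ((t, s) : ℝ × ℝ)) := continuous_const.prodMk continuous_id
    have hXc : Continuous (fun s : ℝ => X t s) := hYc.comp cq
    have cP1 : Continuous P1 := by
      apply continuous_finset_sum
      intro i _
      exact ((continuous_apply i).comp ((hDβc.comp hXc).clm_apply (hXtc.comp cq))).mul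
        ((continuous_apply i).comp (hXsc.comp cq))
    have cQ : Continuous Q := by
      apply continuous_finset_sum
      intro i _
      exact ((continuous_apply i).comp ((hDβc.comp hXc).clm_apply (hXsc.comp cq))).mul
        ((continuous_apply i).comp (hXtc.comp cq))
    have cP2 : Continuous P2 := by
      apply continuous_finset_sum
      intro i _
      exact ((continuous_apply i).comp (hβc.comp hXc)).mul
        ((continuous_apply i).comp
          ((((hY2.continuous.comp cq).clm_apply continuous_const)).clm_apply continuous_const))
    -- the second piece integrates by parts to `-∫ Q`
    have hP2int : (∫ s in (0:ℝ)..1, P2 s) = - ∫ s in (0:ℝ)..1, Q s := by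
      have hP2eq : ∀ s : ℝ, P2 s = ∑ i, β (X t s) i *
          fderiv ℝ (fun q => fderiv ℝ Y q) (t, s) (0, 1) (1, 0) i := by
        intro s
        exact Finset.sum_congr rfl fun i _ => by rw [hsymm (t, s) (1, 0) (0, 1)]
      have cW : ∀ i : Fin d, Continuous (fun s : ℝ =>
          fderiv ℝ (fun q => fderiv ℝ Y q) (t, s) (0, 1) (1, 0) i) := by
        intro i
        exact (continuous_apply i).comp
          ((((hY2.continuous.comp cq).clm_apply continuous_const)).clm_apply continuous_const)
      have cterm : ∀ i : Fin d, Continuous (fun s : ℝ => β (X t s) i *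
          fderiv ℝ (fun q => fderiv ℝ Y q) (t, s) (0, 1) (1, 0) i) := by
        intro i
        exact ((continuous_apply i).comp (hβc.comp hXc)).mul (cW i)
      have cu' : ∀ i : Fin d, Continuous (fun s : ℝ => fderiv ℝ β (X t s) (Xs (t, s)) i) := by
        intro i
        exact (continuous_apply i).comp ((hDβc.comp hXc).clm_apply (hXsc.comp cq))
      have cw : ∀ i : Fin d, Continuous (fun s : ℝ => Xt (t, s) i) := by
        intro i
        exact (continuous_apply i).comp (hXtc.comp cq)
      calc (∫ s in (0:ℝ)..1, P2 s)
          = ∫ s in (0:ℝ)..1, ∑ i, β (X t s) i *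
              fderiv ℝ (fun q => fderiv ℝ Y q) (t, s) (0, 1) (1, 0) i := by
            exact intervalIntegral.integral_congr fun s _ => hP2eq s
        _ = ∑ i, ∫ s in (0:ℝ)..1, β (X t s) i *
              fderiv ℝ (fun q => fderiv ℝ Y q) (t, s) (0, 1) (1, 0) i := by
            exact intervalIntegral.integral_finset_sum fun i _ => (cterm i).intervalIntegrable 0 1
        _ = ∑ i : Fin d, (0 - ∫ s in (0:ℝ)..1, fderiv ℝ β (X t s) (Xs (t, s)) i * Xt (t, s) i) := by
            apply Finset.sum_congr rfl
            intro i _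
            have hu : ∀ s ∈ Set.uIcc (0:ℝ) 1, HasDerivAt (fun σ => β (X t σ) i)
                (fderiv ℝ β (X t s) (Xs (t, s)) i) s := by
              intro s _
              exact ((ContinuousLinearMap.proj (R := ℝ) (φ := fun _ : Fin d => ℝ)
                i).hasFDerivAt.comp (Y (t, s)) (hβdiff (Y (t, s)))).comp_hasDerivAt s (hA t s)
            have hw : ∀ s ∈ Set.uIcc (0:ℝ) 1, HasDerivAt (fun σ => Xt (t, σ) i)
                (fderiv ℝ (fun q => fderiv ℝ Y q) (t, s) (0, 1) (1, 0) i) s :=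
              fun s _ => hDi t s i
            have ibp := intervalIntegral.integral_mul_deriv_eq_deriv_mul hu hw
              ((cu' i).intervalIntegrable 0 1) ((cW i).intervalIntegrable 0 1)
            rw [ibp]
            congr 1
            -- boundary term vanishes
            have h01 : X t 1 = X t 0 + fun i => ((N i : ℝ)) := by
              have := hper t 0; rwa [zero_add] at this
            have hu10 : β (X t 1) = β (X t 0) := by rw [h01, hβper]
            have hw10 : Xt (t, 1) i = Xt (t, 0) i := by
              have e1 : (fun τ => X τ 1 i) = fun τ => X τ 0 i + ((N i : ℝ)) := by
                funext τ
                have := hper τ 0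
                rw [zero_add] at this
                rw [this]; simp
              calc Xt (t, 1) i = deriv (fun τ => X τ 1 i) t := ((hBi t 1 i).deriv).symm
                _ = deriv (fun τ => X τ 0 i + ((N i : ℝ))) t := by rw [e1]
                _ = deriv (fun τ => X τ 0 i) t := deriv_add_const _
                _ = Xt (t, 0) i := (hBi t 0 i).deriv
            rw [hu10, hw10]
            ring
        _ = - ∑ i : Fin d, ∫ s in (0:ℝ)..1, fderiv ℝ β (X t s) (Xs (t, s)) i * Xt (t, s) i := by
            simp [Finset.sum_neg_distrib]
        _ = - ∫ s in (0:ℝ)..1, Q s := by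
            rw [intervalIntegral.integral_finset_sum
              fun i _ => ((cu' i).fun_mul (cw i)).intervalIntegrable 0 1]
    -- pointwise identification of the target integrand with `P1 - Q`
    have hpoint : ∀ s : ℝ, (∑ i, ∑ j, pd j (fun x => β x i) (X t s) *
        (v t (X t s) j * deriv (fun σ => X t σ i) s
          - deriv (fun σ => X t σ j) s * v t (X t s) i)) = P1 s - Q s := by
      intro s
      have hv' : v t (X t s) = Xt (t, s) := (hXtv t s).symm
      have hP1' : P1 s = ∑ i, (∑ j, pd j (fun y => β y i) (X t s) * Xt (t, s) j) * Xs (t, s) i :=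
        Finset.sum_congr rfl fun i _ => by rw [hfd]
      have hQ' : Q s = ∑ i, (∑ j, pd j (fun y => β y i) (X t s) * Xs (t, s) j) * Xt (t, s) i :=
        Finset.sum_congr rfl fun i _ => by rw [hfd]
      rw [hP1', hQ', ← Finset.sum_sub_distrib]
      apply Finset.sum_congr rfl
      intro i _
      rw [Finset.sum_mul, Finset.sum_mul, ← Finset.sum_sub_distrib]
      apply Finset.sum_congr rfl
      intro j _
      rw [hv', (hAi t s i).deriv, (hAi t s j).deriv]
      ring
    -- assemble
    have hH : (fun s : ℝ => H (t, s)) = fun s => P1 s + P2 s := by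
      funext s
      exact Finset.sum_add_distrib
    calc (∫ s in (0:ℝ)..1, ∑ i, ∑ j, pd j (fun x => β x i) (X t s) *
        (v t (X t s) j * deriv (fun σ => X t σ i) s
          - deriv (fun σ => X t σ j) s * v t (X t s) i))
        = ∫ s in (0:ℝ)..1, (P1 s - Q s) :=
          intervalIntegral.integral_congr fun s _ => hpoint s
      _ = (∫ s in (0:ℝ)..1, P1 s) - ∫ s in (0:ℝ)..1, Q s :=
          intervalIntegral.integral_sub (cP1.intervalIntegrable 0 1) (cQ.intervalIntegrable 0 1)
      _ = (∫ s in (0:ℝ)..1, P1 s) + ∫ s in (0:ℝ)..1, P2 s := by rw [hP2int]; ring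
      _ = ∫ s in (0:ℝ)..1, (P1 s + P2 s) :=
          (intervalIntegral.integral_add (cP1.intervalIntegrable 0 1)
            (cP2.intervalIntegrable 0 1)).symm
      _ = ∫ s in (0:ℝ)..1, H (t, s) := by rw [hH]
  rw [hval]
  exact key

end
end

section
/- Let F : (0,∞) × ℝ^d → ℝ be a C² function, and let ρ : [0,T] × ℝ^d → (0,∞), B : [0,T] × ℝ^d → ℝ^d, v : [0,T] × ℝ^d → ℝ^d be smooth maps, ℤ^d-periodic in the space variable, satisfying ∇·B = 0, the continuity equation ∂_t ρ + ∇·(ρ v) = 0, and the induction equation ∂_t B + ∇·(B⊗v − v⊗B) = 0. Then for every t ∈ [0,T], d/dt ∫_{[0,1]^d} F(ρ(t,x), B(t,x)) dx = − ∫_{[0,1]^d} v(t,x) · G(t,x) dx, where G_i = −ρ ∂_i( F_ρ(ρ,B) ) + ( ∂_j( F_{B^i}(ρ,B) ) − ∂_i( F_{B^j}(ρ,B) ) ) B^j, with F_ρ and F_{B^i} the partial derivatives of F and summation over repeated indices. -/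
open MeasureTheory intervalIntegral

noncomputable section

lemma pd_neg {d : ℕ} (j : Fin d) (f : (Fin d → ℝ) → ℝ) (x : Fin d → ℝ) :
    pd j (fun y => -f y) x = -pd j f x := by
  simp [pd, fderiv_neg]

lemma pd_add {d : ℕ} (j : Fin d) {f g : (Fin d → ℝ) → ℝ} {x : Fin d → ℝ}
    (hf : DifferentiableAt ℝ f x) (hg : DifferentiableAt ℝ g x) :
    pd j (fun y => f y + g y) x = pd j f x + pd j g x := by
  simp [pd, fderiv_fun_add hf hg]

lemma pd_sum {d : ℕ} (j : Fin d) {ι : Type*} (s : Finset ι)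
    {f : ι → (Fin d → ℝ) → ℝ} {x : Fin d → ℝ}
    (hf : ∀ i ∈ s, DifferentiableAt ℝ (f i) x) :
    pd j (fun y => ∑ i ∈ s, f i y) x = ∑ i ∈ s, pd j (f i) x := by
  simp [pd, fderiv_fun_sum hf]

lemma pd_mul {d : ℕ} (j : Fin d) {f g : (Fin d → ℝ) → ℝ} {x : Fin d → ℝ}
    (hf : DifferentiableAt ℝ f x) (hg : DifferentiableAt ℝ g x) :
    pd j (fun y => f y * g y) x = pd j f x * g x + f x * pd j g x := by
  simp [pd, fderiv_fun_mul hf hg]; ring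

lemma pd_continuous {d : ℕ} (j : Fin d) {f : (Fin d → ℝ) → ℝ} (hf : ContDiff ℝ 1 f) :
    Continuous (pd j f) :=
  (hf.continuous_fderiv one_ne_zero).clm_apply continuous_const

lemma clm_decomp {d : ℕ} (L : (ℝ × (Fin d → ℝ)) →L[ℝ] ℝ) (a : ℝ) (b : Fin d → ℝ) :
    L (a, b) = L ((1:ℝ), (0 : Fin d → ℝ)) * a
      + ∑ i, L ((0:ℝ), (Pi.single i 1 : Fin d → ℝ)) * b i := by
  have hab : ((a, b) : ℝ × (Fin d → ℝ))
      = a • ((1:ℝ), (0 : Fin d → ℝ)) + ∑ i, b i • ((0:ℝ), (Pi.single i 1 : Fin d → ℝ)) := by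
    have hsingle : ∀ i, b i • (Pi.single i 1 : Fin d → ℝ) = Pi.single i (b i) := by
      intro i; funext k
      simp [Pi.single_apply]
    rw [Prod.ext_iff]
    constructor
    · simp [Prod.fst_sum]
    · simp [Prod.snd_sum, hsingle, Finset.univ_sum_single]
  rw [hab, map_add, _root_.map_smul, map_sum]
  simp only [smul_eq_mul]
  congr 1
  · ring
  · exact Finset.sum_congr rfl fun i _ => by rw [_root_.map_smul]; simp [mul_comm]

/-- The pointwise algebraic identity. -/
lemma pointwise_id {d : ℕ} (a r : (Fin d → ℝ) → ℝ) (c bb vv : Fin d → (Fin d → ℝ) → ℝ)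
    (ha : Differentiable ℝ a) (hr : Differentiable ℝ r)
    (hc : ∀ i, Differentiable ℝ (c i)) (hbb : ∀ i, Differentiable ℝ (bb i))
    (hvv : ∀ i, Differentiable ℝ (vv i)) (x : Fin d → ℝ) :
    a x * (-∑ j, pd j (fun y => r y * vv j y) x)
      + ∑ i, c i x * (-∑ j, pd j (fun y => bb i y * vv j y - vv i y * bb j y) x)
    = (∑ j, pd j (fun y => -(a y * (r y * vv j y)
          + ∑ i, c i y * (bb i y * vv j y - vv i y * bb j y))) x)
      - ∑ i, vv i x * (-(r x) * pd i a x
          + ∑ j, (pd j (c i) x - pd i (c j) x) * bb j x) := by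
  have hrv : ∀ j, DifferentiableAt ℝ (fun y => r y * vv j y) x :=
    fun j => (hr x).mul (hvv j x)
  have hQ : ∀ i j, DifferentiableAt ℝ (fun y => bb i y * vv j y - vv i y * bb j y) x :=
    fun i j => ((hbb i x).mul (hvv j x)).sub ((hvv i x).mul (hbb j x))
  -- expand the divergence term
  have hdiv : ∀ j, pd j (fun y => -(a y * (r y * vv j y)
          + ∑ i, c i y * (bb i y * vv j y - vv i y * bb j y))) x
      = -((pd j a x * (r x * vv j x) + a x * pd j (fun y => r y * vv j y) x)
          + ∑ i, (pd j (c i) x * (bb i x * vv j x - vv i x * bb j x)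
              + c i x * pd j (fun y => bb i y * vv j y - vv i y * bb j y) x)) := by
    intro j
    rw [pd_neg, pd_add j ((ha x).fun_mul (hrv j))
        (DifferentiableAt.fun_sum fun i _ => (hc i x).fun_mul (hQ i j)),
      pd_mul j (ha x) (hrv j),
      pd_sum j Finset.univ (fun i _ => (hc i x).fun_mul (hQ i j))]
    congr 1
    congr 1
    exact Finset.sum_congr rfl fun i _ => pd_mul j (hc i x) (hQ i j)
  rw [Finset.sum_congr rfl fun j _ => hdiv j]
  simp only [neg_add, Finset.sum_add_distrib, Finset.sum_neg_distrib, Finset.mul_sum,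
    mul_neg, neg_neg, Finset.sum_sub_distrib, mul_sub, sub_mul, add_mul]
  have hS2 : (∑ x_1 : Fin d, ∑ x_2 : Fin d, pd x_1 (c x_2) x * (vv x_2 x * bb x_1 x))
      = ∑ x_1 : Fin d, vv x_1 x * ∑ x_2 : Fin d, pd x_2 (c x_1) x * bb x_2 x := by
    rw [Finset.sum_comm]
    exact Finset.sum_congr rfl fun i _ => by
      rw [Finset.mul_sum]
      exact Finset.sum_congr rfl fun j _ => by ring
  have hS1 : (∑ x_1 : Fin d, ∑ x_2 : Fin d, pd x_1 (c x_2) x * (bb x_2 x * vv x_1 x))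
      = ∑ x_1 : Fin d, vv x_1 x * ∑ x_2 : Fin d, pd x_1 (c x_2) x * bb x_2 x :=
    Finset.sum_congr rfl fun i _ => by
      rw [Finset.mul_sum]
      exact Finset.sum_congr rfl fun j _ => by ring
  have hS3 : (∑ x_1 : Fin d, ∑ x_2 : Fin d,
        c x_2 x * pd x_1 (fun y => bb x_2 y * vv x_1 y - vv x_2 y * bb x_1 y) x)
      = ∑ x_1 : Fin d, ∑ x_2 : Fin d,
        c x_1 x * pd x_2 (fun y => bb x_1 y * vv x_2 y - vv x_1 y * bb x_2 y) x :=
    Finset.sum_comm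
  have hA2 : (∑ x_1 : Fin d, pd x_1 a x * (r x * vv x_1 x))
      = ∑ x_1 : Fin d, vv x_1 x * (r x * pd x_1 a x) :=
    Finset.sum_congr rfl fun i _ => by ring
  have hlast : ∑ x_1 : Fin d, vv x_1 x * (-r x * pd x_1 a x
        + (∑ x_2 : Fin d, pd x_2 (c x_1) x * bb x_2 x
          - ∑ x_2 : Fin d, pd x_1 (c x_2) x * bb x_2 x))
      = -∑ x_1 : Fin d, vv x_1 x * (r x * pd x_1 a x)
        + ((∑ x_1 : Fin d, vv x_1 x * ∑ x_2 : Fin d, pd x_2 (c x_1) x * bb x_2 x)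
          - ∑ x_1 : Fin d, vv x_1 x * ∑ x_2 : Fin d, pd x_1 (c x_2) x * bb x_2 x) := by
    have hpt : ∀ i : Fin d, vv i x * (-r x * pd i a x
        + (∑ x_2 : Fin d, pd x_2 (c i) x * bb x_2 x
          - ∑ x_2 : Fin d, pd i (c x_2) x * bb x_2 x))
      = -(vv i x * (r x * pd i a x))
        + ((vv i x * ∑ x_2 : Fin d, pd x_2 (c i) x * bb x_2 x)
          - vv i x * ∑ x_2 : Fin d, pd i (c x_2) x * bb x_2 x) := fun i => by ring
    rw [Finset.sum_congr rfl fun i _ => hpt i, Finset.sum_add_distrib,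
      Finset.sum_sub_distrib, Finset.sum_neg_distrib]
  linarith [hS1, hS2, hS3, hA2, hlast]

lemma integral_pd_eq_zero {d : ℕ} (j : Fin d) (f : (Fin d → ℝ) → ℝ)
    (hf : ContDiff ℝ 1 f)
    (hper : ∀ (x : Fin d → ℝ) (k : Fin d → ℤ), f (x + fun i => (k i : ℝ)) = f x) :
    ∫ x in Set.Icc (0 : Fin d → ℝ) 1, pd j f x = 0 := by
  obtain ⟨n, rfl⟩ : ∃ n, d = n + 1 := ⟨d - 1, by have := j.pos; omega⟩
  have hle : (0 : Fin (n+1) → ℝ) ≤ 1 := fun i => zero_le_one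
  have hEq : (fun x : Fin (n+1) → ℝ =>
      ∑ i, (if i = j then fderiv ℝ f x else 0) (Pi.single i 1)) = pd j f := by
    funext x
    rw [Finset.sum_eq_single j] <;> simp +contextual [pd]
  have hcont : Continuous (pd j f) :=
    (hf.continuous_fderiv one_ne_zero).clm_apply continuous_const
  have key := integral_divergence_of_hasFDerivAt_off_countable' (0 : Fin (n+1) → ℝ) 1 hle
    (fun i x => if i = j then f x else 0)
    (fun i x => if i = j then fderiv ℝ f x else 0) ∅ Set.countable_empty
    (fun i => by
      by_cases h : i = j <;> simp only [h, if_pos, if_neg, ite_self]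
      · exact (hf.continuous).continuousOn
      · simp [h]; exact continuousOn_const)
    (fun x _ i => by
      by_cases h : i = j
      · simp only [h, if_true]; exact (hf.differentiable one_ne_zero x).hasFDerivAt
      · simp only [h, if_false]; exact hasFDerivAt_const 0 x)
    (by
      rw [show (fun x : Fin (n+1) → ℝ =>
        ∑ i, (if i = j then fderiv ℝ f x else 0) (Pi.single i 1)) = pd j f from hEq]
      exact hcont.continuousOn.integrableOn_compact isCompact_Icc)
  rw [show (fun x : Fin (n+1) → ℝ =>
        ∑ i, (if i = j then fderiv ℝ f x else 0) (Pi.single i 1)) = pd j f from hEq] at key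
  rw [key, Finset.sum_eq_single j]
  · have hins : ∀ (x : Fin n → ℝ), Fin.insertNth j ((1 : Fin (n+1) → ℝ) j) x
        = Fin.insertNth j ((0 : Fin (n+1) → ℝ) j) x
          + fun i => ((Pi.single j 1 : Fin (n+1) → ℤ) i : ℝ) := by
      intro x; funext i
      refine Fin.succAboveCases j ?_ ?_ i
      · simp
      · intro m; simp [Fin.succAbove_ne j m, Pi.single_apply, (Fin.succAbove_ne j m).symm]
    simp only [if_pos]
    rw [sub_eq_zero]
    apply setIntegral_congr_fun measurableSet_Icc
    intro x _
    show f (j.insertNth ((1 : Fin (n+1) → ℝ) j) x) = f (j.insertNth ((0 : Fin (n+1) → ℝ) j) x)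
    rw [hins x, hper]
  · intro i _ hij
    simp [hij]
  · simp


/-- Steepest-descent computation: if `ρ, B, v` are smooth periodic
fields with `∇·B = 0`, solving the continuity equation `∂_t ρ + ∇·(ρv) = 0` and the
induction equation `∂_t B + ∇·(B⊗v − v⊗B) = 0`, and `F` is `C²` on `(0,∞) × ℝ^d`, then
`d/dt ∫ F(ρ,B) dx = −∫ v·G dx` where
`G_i = −ρ ∂_i(F_ρ(ρ,B)) + (∂_j(F_{B^i}(ρ,B)) − ∂_i(F_{B^j}(ρ,B))) B^j`. -/
theorem stmt_5 (d : ℕ) (T : ℝ) (hT : 0 < T)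
    (F : ℝ × (Fin d → ℝ) → ℝ)
    (ρ : ℝ → (Fin d → ℝ) → ℝ) (B v : ℝ → (Fin d → ℝ) → Fin d → ℝ)
    (hF : ContDiffOn ℝ 2 F (Set.Ioi (0:ℝ) ×ˢ (Set.univ : Set (Fin d → ℝ))))
    (hρ : ContDiff ℝ (⊤ : ℕ∞) (fun p : ℝ × (Fin d → ℝ) => ρ p.1 p.2))
    (hB : ContDiff ℝ (⊤ : ℕ∞) (fun p : ℝ × (Fin d → ℝ) => B p.1 p.2))
    (hv : ContDiff ℝ (⊤ : ℕ∞) (fun p : ℝ × (Fin d → ℝ) => v p.1 p.2))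
    (hρpos : ∀ t x, 0 < ρ t x)
    (hρper : ∀ (t : ℝ) (x : Fin d → ℝ) (k : Fin d → ℤ), ρ t (x + fun i => (k i : ℝ)) = ρ t x)
    (hBper : ∀ (t : ℝ) (x : Fin d → ℝ) (k : Fin d → ℤ), B t (x + fun i => (k i : ℝ)) = B t x)
    (hvper : ∀ (t : ℝ) (x : Fin d → ℝ) (k : Fin d → ℤ), v t (x + fun i => (k i : ℝ)) = v t x)
    (hdivB : ∀ t ∈ Set.Icc (0:ℝ) T, ∀ x, ∑ j, pd j (fun y => B t y j) x = 0)
    (hcont : ∀ t ∈ Set.Icc (0:ℝ) T, ∀ x,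
      deriv (fun τ => ρ τ x) t + ∑ j, pd j (fun y => ρ t y * v t y j) x = 0)
    (hind : ∀ t ∈ Set.Icc (0:ℝ) T, ∀ x, ∀ i, deriv (fun τ => B τ x i) t
      + ∑ j, pd j (fun y => B t y i * v t y j - v t y i * B t y j) x = 0) :
    ∀ t ∈ Set.Icc (0:ℝ) T, HasDerivAt
      (fun τ => ∫ x in Set.Icc (0 : Fin d → ℝ) 1, F (ρ τ x, B τ x))
      (-∫ x in Set.Icc (0 : Fin d → ℝ) 1, ∑ i, v t x i *
        (-(ρ t x) * pd i (fun y => fderiv ℝ F (ρ t y, B t y) ((1 : ℝ), (0 : Fin d → ℝ))) x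
          + ∑ j, (pd j (fun y => fderiv ℝ F (ρ t y, B t y) ((0 : ℝ), Pi.single i 1)) x
              - pd i (fun y => fderiv ℝ F (ρ t y, B t y) ((0 : ℝ), Pi.single j 1)) x)
            * B t x j)) t := by
  intro t ht
  have hUopen : IsOpen (Set.Ioi (0:ℝ) ×ˢ (Set.univ : Set (Fin d → ℝ))) :=
    isOpen_Ioi.prod isOpen_univ
  have hq : ContDiff ℝ (⊤:ℕ∞) (fun p : ℝ × (Fin d → ℝ) => (ρ p.1 p.2, B p.1 p.2)) := hρ.prodMk hB
  have hqU : ∀ p : ℝ × (Fin d → ℝ),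
      ((ρ p.1 p.2, B p.1 p.2) : ℝ × (Fin d → ℝ)) ∈ Set.Ioi (0:ℝ) ×ˢ (Set.univ : Set (Fin d → ℝ)) :=
    fun p => ⟨hρpos _ _, trivial⟩
  have hFd1 : ContDiffOn ℝ 1 (fderiv ℝ F) (Set.Ioi (0:ℝ) ×ˢ (Set.univ : Set (Fin d → ℝ))) :=
    hF.fderiv_of_isOpen hUopen (by norm_num)
  have hFdiffAt : ∀ p : ℝ × (Fin d → ℝ),
      HasFDerivAt F (fderiv ℝ F (ρ p.1 p.2, B p.1 p.2)) (ρ p.1 p.2, B p.1 p.2) := fun p =>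
    ((hF.differentiableOn (by norm_num)).differentiableAt (hUopen.mem_nhds (hqU p))).hasFDerivAt
  have hDq : ContDiff ℝ 1 (fun p : ℝ × (Fin d → ℝ) => fderiv ℝ F (ρ p.1 p.2, B p.1 p.2)) := by
    rw [← contDiffOn_univ]
    exact hFd1.comp ((hq.of_le (by exact_mod_cast le_top : (1:WithTop ℕ∞) ≤ _)).contDiffOn) (fun p _ => hqU p)
  have hA : ContDiff ℝ 1 (fun p : ℝ × (Fin d → ℝ) =>
      fderiv ℝ F (ρ p.1 p.2, B p.1 p.2) ((1:ℝ), (0:Fin d → ℝ))) := hDq.clm_apply contDiff_const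
  have hC : ∀ i : Fin d, ContDiff ℝ 1 (fun p : ℝ × (Fin d → ℝ) =>
      fderiv ℝ F (ρ p.1 p.2, B p.1 p.2) ((0:ℝ), (Pi.single i 1 : Fin d → ℝ))) :=
    fun i => hDq.clm_apply contDiff_const
  set ρt' : ℝ × (Fin d → ℝ) → ℝ :=
    fun p => fderiv ℝ (fun p' : ℝ × (Fin d → ℝ) => ρ p'.1 p'.2) p ((1:ℝ), (0:Fin d → ℝ))
    with hρt'_def
  set Bt' : ℝ × (Fin d → ℝ) → Fin d → ℝ :=
    fun p => fderiv ℝ (fun p' : ℝ × (Fin d → ℝ) => B p'.1 p'.2) p ((1:ℝ), (0:Fin d → ℝ))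
    with hBt'_def
  have hρt'c : Continuous ρt' := (hρ.continuous_fderiv (by simp)).clm_apply continuous_const
  have hBt'c : ∀ i, Continuous (fun p => Bt' p i) := fun i =>
    (continuous_apply i).comp ((hB.continuous_fderiv (by simp)).clm_apply continuous_const)
  have hline : ∀ (t' : ℝ) (x : Fin d → ℝ),
      HasDerivAt (fun τ : ℝ => ((τ, x) : ℝ × (Fin d → ℝ))) ((1:ℝ), (0:Fin d → ℝ)) t' :=
    fun t' x => (hasDerivAt_id t').prodMk (hasDerivAt_const t' x)
  have hρd : ∀ (t' : ℝ) (x : Fin d → ℝ), HasDerivAt (fun τ => ρ τ x) (ρt' (t', x)) t' :=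
    fun t' x => ((hρ.differentiable (by simp) _).hasFDerivAt).comp_hasDerivAt t' (hline t' x)
  have hBd : ∀ (t' : ℝ) (x : Fin d → ℝ), HasDerivAt (fun τ => B τ x) (Bt' (t', x)) t' :=
    fun t' x => ((hB.differentiable (by simp) _).hasFDerivAt).comp_hasDerivAt t' (hline t' x)
  have hBdi : ∀ (t' : ℝ) (x : Fin d → ℝ) (i : Fin d),
      HasDerivAt (fun τ => B τ x i) (Bt' (t', x) i) t' :=
    fun t' x i => (hasDerivAt_pi.1 (hBd t' x)) i
  set dtΦ : ℝ × (Fin d → ℝ) → ℝ := fun p =>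
    fderiv ℝ F (ρ p.1 p.2, B p.1 p.2) ((1:ℝ), (0:Fin d → ℝ)) * ρt' p
      + ∑ i, fderiv ℝ F (ρ p.1 p.2, B p.1 p.2) ((0:ℝ), (Pi.single i 1 : Fin d → ℝ)) * Bt' p i
    with hdtΦ_def
  have hdtΦc : Continuous dtΦ :=
    (hA.continuous.mul hρt'c).add
      (continuous_finset_sum _ fun i _ => (hC i).continuous.mul (hBt'c i))
  have hΦd : ∀ (t' : ℝ) (x : Fin d → ℝ),
      HasDerivAt (fun τ => F (ρ τ x, B τ x)) (dtΦ (t', x)) t' := by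
    intro t' x
    have h1 : HasDerivAt (fun τ => ((ρ τ x, B τ x) : ℝ × (Fin d → ℝ)))
        (ρt' (t', x), Bt' (t', x)) t' := (hρd t' x).prodMk (hBd t' x)
    have h2 := (hFdiffAt (t', x)).comp_hasDerivAt t' h1
    have h3 := clm_decomp (fderiv ℝ F (ρ t' x, B t' x)) (ρt' (t', x)) (Bt' (t', x))
    rw [h3] at h2
    exact h2
  have hΦc : Continuous (fun p : ℝ × (Fin d → ℝ) => F (ρ p.1 p.2, B p.1 p.2)) :=
    hF.continuousOn.comp_continuous hq.continuous hqU
  have hvolIcc : volume (Set.Icc (0:Fin d → ℝ) 1) < ⊤ := isCompact_Icc.measure_lt_top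
  obtain ⟨M, hM⟩ := (IsCompact.prod (isCompact_Icc : IsCompact (Set.Icc (t-1) (t+1)))
    (isCompact_Icc : IsCompact (Set.Icc (0:Fin d → ℝ) 1))).exists_bound_of_continuousOn
    hdtΦc.continuousOn
  have key := hasDerivAt_integral_of_dominated_loc_of_deriv_le
    (μ := volume.restrict (Set.Icc (0:Fin d → ℝ) 1))
    (F := fun τ x => F (ρ τ x, B τ x)) (F' := fun τ x => dtΦ (τ, x)) (x₀ := t)
    (bound := fun _ => |M| + 1) (s := Metric.ball t 1) (Metric.ball_mem_nhds t one_pos)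
    (Filter.Eventually.of_forall fun τ => Continuous.aestronglyMeasurable
      (by exact hΦc.comp (continuous_const.prodMk continuous_id)))
    (by
      apply ContinuousOn.integrableOn_compact isCompact_Icc
      exact (hΦc.comp (continuous_const.prodMk continuous_id)).continuousOn)
    (Continuous.aestronglyMeasurable
      (by exact hdtΦc.comp (continuous_const.prodMk continuous_id)))
    (by
      filter_upwards [ae_restrict_mem measurableSet_Icc] with x hx
      intro τ hτ
      have hmem : ((τ, x) : ℝ × (Fin d → ℝ)) ∈
          Set.Icc (t-1) (t+1) ×ˢ Set.Icc (0:Fin d → ℝ) 1 := by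
        refine ⟨?_, hx⟩
        have h := Metric.mem_ball.1 hτ
        rw [Real.dist_eq] at h
        have := abs_lt.1 h
        constructor <;> [linarith [this.1]; linarith [this.2]]
      calc ‖dtΦ (τ, x)‖ ≤ M := hM _ hmem
        _ ≤ |M| + 1 := by have := le_abs_self M; linarith)
    (by
      have : IntegrableOn (fun _ : Fin d → ℝ => |M| + 1) (Set.Icc (0:Fin d → ℝ) 1) volume :=
        integrableOn_const hvolIcc.ne
      exact this)
    (Filter.Eventually.of_forall fun x τ _ => hΦd τ x)
  -- slice smoothness at fixed time t
  have hρs1 : ContDiff ℝ 1 (fun y => ρ t y) :=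
    (hρ.comp (contDiff_const.prodMk contDiff_id)).of_le (by exact_mod_cast le_top)
  have hvslice : ContDiff ℝ (⊤:ℕ∞) (fun y => v t y) := hv.comp (contDiff_const.prodMk contDiff_id)
  have hbslice : ContDiff ℝ (⊤:ℕ∞) (fun y => B t y) := hB.comp (contDiff_const.prodMk contDiff_id)
  have hvs : ∀ j : Fin d, ContDiff ℝ 1 (fun y => v t y j) :=
    fun j => (contDiff_pi.1 hvslice j).of_le (by exact_mod_cast le_top)
  have hbs : ∀ i : Fin d, ContDiff ℝ 1 (fun y => B t y i) :=
    fun i => (contDiff_pi.1 hbslice i).of_le (by exact_mod_cast le_top)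
  have haat : ContDiff ℝ 1 (fun y => fderiv ℝ F (ρ t y, B t y) ((1:ℝ), (0:Fin d → ℝ))) :=
    hA.comp (contDiff_const.prodMk contDiff_id)
  have hcct : ∀ i : Fin d, ContDiff ℝ 1
      (fun y => fderiv ℝ F (ρ t y, B t y) ((0:ℝ), (Pi.single i 1 : Fin d → ℝ))) :=
    fun i => (hC i).comp (contDiff_const.prodMk contDiff_id)
  have haaD : Differentiable ℝ (fun y => fderiv ℝ F (ρ t y, B t y) ((1:ℝ), (0:Fin d → ℝ))) :=
    haat.differentiable one_ne_zero
  have hccD : ∀ i : Fin d, Differentiable ℝ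
      (fun y => fderiv ℝ F (ρ t y, B t y) ((0:ℝ), (Pi.single i 1 : Fin d → ℝ))) :=
    fun i => (hcct i).differentiable one_ne_zero
  have hρD : Differentiable ℝ (fun y => ρ t y) := hρs1.differentiable one_ne_zero
  have hvvD : ∀ j : Fin d, Differentiable ℝ (fun y => v t y j) :=
    fun j => (hvs j).differentiable one_ne_zero
  have hbbD : ∀ i : Fin d, Differentiable ℝ (fun y => B t y i) :=
    fun i => (hbs i).differentiable one_ne_zero
  -- pointwise identity
  have hpt : ∀ x : Fin d → ℝ, dtΦ (t, x)
      = (∑ j, pd j (fun y =>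
            -(fderiv ℝ F (ρ t y, B t y) ((1:ℝ), (0:Fin d → ℝ)) * (ρ t y * v t y j)
              + ∑ i, fderiv ℝ F (ρ t y, B t y) ((0:ℝ), (Pi.single i 1 : Fin d → ℝ))
                  * (B t y i * v t y j - v t y i * B t y j))) x)
        - ∑ i, v t x i *
            (-(ρ t x) * pd i (fun y => fderiv ℝ F (ρ t y, B t y) ((1:ℝ), (0:Fin d → ℝ))) x
              + ∑ j, (pd j (fun y =>
                    fderiv ℝ F (ρ t y, B t y) ((0:ℝ), (Pi.single i 1 : Fin d → ℝ))) x
                  - pd i (fun y =>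
                    fderiv ℝ F (ρ t y, B t y) ((0:ℝ), (Pi.single j 1 : Fin d → ℝ))) x)
                * B t x j) := by
    intro x
    have h1 : ρt' (t, x) = -∑ j, pd j (fun y => ρ t y * v t y j) x := by
      have hc := hcont t ht x
      have hd := (hρd t x).deriv
      linarith
    have h2 : ∀ i, Bt' (t, x) i
        = -∑ j, pd j (fun y => B t y i * v t y j - v t y i * B t y j) x := by
      intro i
      have hc := hind t ht x i
      have hd := (hBdi t x i).deriv
      linarith
    have h0 : dtΦ (t, x)
        = fderiv ℝ F (ρ t x, B t x) ((1:ℝ), (0:Fin d → ℝ))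
            * (-∑ j, pd j (fun y => ρ t y * v t y j) x)
          + ∑ i, fderiv ℝ F (ρ t x, B t x) ((0:ℝ), (Pi.single i 1 : Fin d → ℝ))
            * (-∑ j, pd j (fun y => B t y i * v t y j - v t y i * B t y j) x) := by
      show fderiv ℝ F (ρ t x, B t x) ((1:ℝ), (0:Fin d → ℝ)) * ρt' (t, x)
          + ∑ i, fderiv ℝ F (ρ t x, B t x) ((0:ℝ), (Pi.single i 1 : Fin d → ℝ)) * Bt' (t, x) i
          = _
      rw [h1]
      congr 1
      exact Finset.sum_congr rfl fun i _ => by rw [h2 i]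
    rw [h0]
    exact pointwise_id (fun y => fderiv ℝ F (ρ t y, B t y) ((1:ℝ), (0:Fin d → ℝ)))
      (fun y => ρ t y)
      (fun i y => fderiv ℝ F (ρ t y, B t y) ((0:ℝ), (Pi.single i 1 : Fin d → ℝ)))
      (fun i y => B t y i) (fun j y => v t y j)
      haaD hρD hccD hbbD hvvD x
  -- the divergence terms integrate to zero
  have hWj : ∀ j : Fin d, ContDiff ℝ 1 (fun y =>
      -(fderiv ℝ F (ρ t y, B t y) ((1:ℝ), (0:Fin d → ℝ)) * (ρ t y * v t y j)
        + ∑ i, fderiv ℝ F (ρ t y, B t y) ((0:ℝ), (Pi.single i 1 : Fin d → ℝ))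
            * (B t y i * v t y j - v t y i * B t y j))) :=
    fun j => ((haat.mul (hρs1.mul (hvs j))).add
      (ContDiff.sum fun i _ => (hcct i).mul
        (((hbs i).mul (hvs j)).sub ((hvs i).mul (hbs j))))).neg
  have hWper : ∀ (j : Fin d) (x : Fin d → ℝ) (k : Fin d → ℤ),
      (fun y => -(fderiv ℝ F (ρ t y, B t y) ((1:ℝ), (0:Fin d → ℝ)) * (ρ t y * v t y j)
        + ∑ i, fderiv ℝ F (ρ t y, B t y) ((0:ℝ), (Pi.single i 1 : Fin d → ℝ))
            * (B t y i * v t y j - v t y i * B t y j))) (x + fun i => (k i : ℝ))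
      = (fun y => -(fderiv ℝ F (ρ t y, B t y) ((1:ℝ), (0:Fin d → ℝ)) * (ρ t y * v t y j)
        + ∑ i, fderiv ℝ F (ρ t y, B t y) ((0:ℝ), (Pi.single i 1 : Fin d → ℝ))
            * (B t y i * v t y j - v t y i * B t y j))) x := by
    intro j x k
    simp only [hρper, hBper, hvper]
  have hintW : ∀ j : Fin d, (∫ x in Set.Icc (0:Fin d → ℝ) 1, pd j (fun y =>
      -(fderiv ℝ F (ρ t y, B t y) ((1:ℝ), (0:Fin d → ℝ)) * (ρ t y * v t y j)
        + ∑ i, fderiv ℝ F (ρ t y, B t y) ((0:ℝ), (Pi.single i 1 : Fin d → ℝ))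
            * (B t y i * v t y j - v t y i * B t y j))) x) = 0 :=
    fun j => integral_pd_eq_zero j _ (hWj j) (hWper j)
  have hWint : ∀ j : Fin d, IntegrableOn (pd j (fun y =>
      -(fderiv ℝ F (ρ t y, B t y) ((1:ℝ), (0:Fin d → ℝ)) * (ρ t y * v t y j)
        + ∑ i, fderiv ℝ F (ρ t y, B t y) ((0:ℝ), (Pi.single i 1 : Fin d → ℝ))
            * (B t y i * v t y j - v t y i * B t y j)))) (Set.Icc (0:Fin d → ℝ) 1) volume :=
    fun j => (pd_continuous j (hWj j)).continuousOn.integrableOn_compact isCompact_Icc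
  have hScont : Continuous (fun x => ∑ i, v t x i *
      (-(ρ t x) * pd i (fun y => fderiv ℝ F (ρ t y, B t y) ((1:ℝ), (0:Fin d → ℝ))) x
        + ∑ j, (pd j (fun y => fderiv ℝ F (ρ t y, B t y) ((0:ℝ), (Pi.single i 1 : Fin d → ℝ))) x
            - pd i (fun y => fderiv ℝ F (ρ t y, B t y) ((0:ℝ), (Pi.single j 1 : Fin d → ℝ))) x)
          * B t x j)) :=
    continuous_finset_sum _ fun i _ => ((hvs i).continuous).mul
      (((hρs1.continuous.neg).mul (pd_continuous i haat)).add
        (continuous_finset_sum _ fun j _ =>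
          ((pd_continuous j (hcct i)).sub (pd_continuous i (hcct j))).mul (hbs j).continuous))
  have hSint : IntegrableOn (fun x => ∑ i, v t x i *
      (-(ρ t x) * pd i (fun y => fderiv ℝ F (ρ t y, B t y) ((1:ℝ), (0:Fin d → ℝ))) x
        + ∑ j, (pd j (fun y => fderiv ℝ F (ρ t y, B t y) ((0:ℝ), (Pi.single i 1 : Fin d → ℝ))) x
            - pd i (fun y => fderiv ℝ F (ρ t y, B t y) ((0:ℝ), (Pi.single j 1 : Fin d → ℝ))) x)
          * B t x j)) (Set.Icc (0:Fin d → ℝ) 1) volume :=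
    hScont.continuousOn.integrableOn_compact isCompact_Icc
  have hval : (∫ x in Set.Icc (0:Fin d → ℝ) 1, dtΦ (t, x))
      = -∫ x in Set.Icc (0:Fin d → ℝ) 1, ∑ i, v t x i *
          (-(ρ t x) * pd i (fun y => fderiv ℝ F (ρ t y, B t y) ((1:ℝ), (0:Fin d → ℝ))) x
            + ∑ j, (pd j (fun y =>
                  fderiv ℝ F (ρ t y, B t y) ((0:ℝ), (Pi.single i 1 : Fin d → ℝ))) x
                - pd i (fun y =>
                  fderiv ℝ F (ρ t y, B t y) ((0:ℝ), (Pi.single j 1 : Fin d → ℝ))) x)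
              * B t x j) := by
    have hcongr : (∫ x in Set.Icc (0:Fin d → ℝ) 1, dtΦ (t, x))
        = ∫ x in Set.Icc (0:Fin d → ℝ) 1,
            ((∑ j, pd j (fun y =>
              -(fderiv ℝ F (ρ t y, B t y) ((1:ℝ), (0:Fin d → ℝ)) * (ρ t y * v t y j)
                + ∑ i, fderiv ℝ F (ρ t y, B t y) ((0:ℝ), (Pi.single i 1 : Fin d → ℝ))
                    * (B t y i * v t y j - v t y i * B t y j))) x)
            - ∑ i, v t x i *
              (-(ρ t x) * pd i (fun y => fderiv ℝ F (ρ t y, B t y) ((1:ℝ), (0:Fin d → ℝ))) x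
                + ∑ j, (pd j (fun y =>
                      fderiv ℝ F (ρ t y, B t y) ((0:ℝ), (Pi.single i 1 : Fin d → ℝ))) x
                    - pd i (fun y =>
                      fderiv ℝ F (ρ t y, B t y) ((0:ℝ), (Pi.single j 1 : Fin d → ℝ))) x)
                  * B t x j)) := by
      congr 1
      funext x
      exact hpt x
    rw [hcongr, integral_sub (integrable_finset_sum _ fun j _ => hWint j) hSint,
      integral_finset_sum _ fun j _ => hWint j]
    rw [Finset.sum_congr rfl fun j _ => hintW j]
    simp
  have hD := key.2
  rw [← hval]
  exact hD

end
end

section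
/- Let ρ : ℝ^d → (0,∞) and B : ℝ^d → ℝ^d be smooth with ∇·B = 0 (i.e. ∂_j B^j = 0). Then for every i ∈ {1,…,d}, and with F(ρ,B) = |B|²/(2ρ), the vector field G_i = −ρ ∂_i(F_ρ(ρ,B)) + ( ∂_j(F_{B^i}(ρ,B)) − ∂_i(F_{B^j}(ρ,B)) ) B^j satisfies G_i = ∂_j( B^i B^j / ρ ); explicitly, ρ ∂_i(B_j/ρ)(B^j/ρ) + ∂_j(B^i/ρ) B^j − ∂_i(B_j/ρ) B^j = ∂_j( B^i B^j / ρ ) pointwise. -/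
noncomputable section

/-- For `F(ρ,B) = |B|²/(2ρ)` (so `F_ρ = −|B|²/(2ρ²)`,
`F_{B^i} = B_i/ρ`), if `ρ > 0`, `B` is smooth with `∇·B = 0`, then the gradient field
`G_i = −ρ∂_i(F_ρ) + (∂_j(F_{B^i}) − ∂_i(F_{B^j}))B^j` equals `∂_j(B^i B^j/ρ)`;
explicitly `ρ ∂_i(B_j/ρ)(B^j/ρ) + ∂_j(B^i/ρ)B^j − ∂_i(B_j/ρ)B^j = ∂_j(B^iB^j/ρ)`. -/
theorem stmt_6 (d : ℕ) (ρ : (Fin d → ℝ) → ℝ) (B : (Fin d → ℝ) → Fin d → ℝ)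
    (hρ : ContDiff ℝ (⊤ : ℕ∞) ρ) (hB : ContDiff ℝ (⊤ : ℕ∞) (fun x => B x))
    (hρpos : ∀ x, 0 < ρ x)
    (hdivB : ∀ x, ∑ j, pd j (fun y => B y j) x = 0) :
    ∀ (x : Fin d → ℝ) (i : Fin d),
      ρ x * ∑ j, pd i (fun y => B y j / ρ y) x * (B x j / ρ x)
        + ∑ j, pd j (fun y => B y i / ρ y) x * B x j
        - ∑ j, pd i (fun y => B y j / ρ y) x * B x j
      = ∑ j, pd j (fun y => B y i * B y j / ρ y) x := by
  intro x i
  have hρd : Differentiable ℝ ρ := hρ.differentiable (by simp)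
  have hBd : ∀ j, Differentiable ℝ (fun y => B y j) :=
    differentiable_pi.1 (hB.differentiable (by simp))
  have hρne : ∀ y, ρ y ≠ 0 := fun y => (hρpos y).ne'
  have hq : ∀ j, Differentiable ℝ (fun y => B y j / ρ y) :=
    by intro j; simp only [div_eq_mul_inv]; exact (hBd j).mul (hρd.inv hρne)
  have pd_mul : ∀ (j : Fin d) (f g : (Fin d → ℝ) → ℝ),
      DifferentiableAt ℝ f x → DifferentiableAt ℝ g x →
      pd j (fun y => f y * g y) x = pd j f x * g x + f x * pd j g x := by
    intro j f g hf hg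
    simp only [pd, fderiv_fun_mul hf hg, ContinuousLinearMap.add_apply,
      ContinuousLinearMap.smul_apply, smul_eq_mul]
    ring
  have hcancel : ρ x * ∑ j, pd i (fun y => B y j / ρ y) x * (B x j / ρ x)
      = ∑ j, pd i (fun y => B y j / ρ y) x * B x j := by
    rw [Finset.mul_sum]
    refine Finset.sum_congr rfl fun j _ => ?_
    rw [mul_comm (ρ x), mul_assoc, div_mul_cancel₀ _ (hρne x)]
  rw [hcancel, add_sub_cancel_left]
  have hterm : ∀ j : Fin d, pd j (fun y => B y i * B y j / ρ y) x
      = pd j (fun y => B y i / ρ y) x * B x j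
        + (B x i / ρ x) * pd j (fun y => B y j) x := by
    intro j
    have : (fun y => B y i * B y j / ρ y) = fun y => (B y i / ρ y) * B y j := by
      funext y; rw [div_mul_eq_mul_div]
    rw [this, pd_mul j _ _ ((hq i) x) ((hBd j) x)]
  simp only [hterm, Finset.sum_add_distrib, ← Finset.mul_sum, hdivB x, mul_zero, add_zero]

end
end

section
/- Let X : [0,T] × ℝ → ℝ^d be smooth and solve the heat equation ∂_t X(t,s) = ∂²_{ss} X(t,s), and suppose there exist smooth vector fields b, v : [0,T] × ℝ^d → ℝ^d such that ∂_s X(t,s) = b(t, X(t,s)) and ∂_t X(t,s) = v(t, X(t,s)) for all (t,s). Then for all (t,s): v(t,X(t,s)) = ((b·∇)b)(t, X(t,s)), and ( ∂_t b + (v·∇)b − (b·∇)v )(t, X(t,s)) = 0. -/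
noncomputable section

lemma clm_sum {d : ℕ} (A : (Fin d → ℝ) →L[ℝ] ℝ) (u : Fin d → ℝ) :
    A u = ∑ j, u j * A (Pi.single j 1) := by
  have h : u = ∑ j, u j • (Pi.single j 1 : Fin d → ℝ) := by
    funext k
    simp [Finset.sum_apply, Pi.single_apply]
  conv_lhs => rw [h]
  rw [map_sum]
  exact Finset.sum_congr rfl fun j _ => by rw [map_smul, smul_eq_mul]

lemma chain_deriv {d : ℕ} (g : (Fin d → ℝ) → ℝ) (γ : ℝ → Fin d → ℝ) (γ' : Fin d → ℝ) (s : ℝ)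
    (hg : DifferentiableAt ℝ g (γ s)) (hγ : ∀ j, HasDerivAt (fun σ => γ σ j) (γ' j) s) :
    HasDerivAt (fun σ => g (γ σ)) (∑ j, γ' j * pd j g (γ s)) s := by
  have h1 : HasDerivAt γ γ' s := hasDerivAt_pi.2 hγ
  have h2 := hg.hasFDerivAt.comp_hasDerivAt s h1
  rwa [clm_sum (fderiv ℝ g (γ s)) γ'] at h2

/-- If a smooth solution `X` of the 1-d heat equation
`∂_t X = ∂²_{ss} X` admits smooth fields `b, v` with `∂_s X(t,s) = b(t,X(t,s))`
and `∂_t X(t,s) = v(t,X(t,s))`, then along the loop `v = (b·∇)b` and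
`∂_t b + (v·∇)b − (b·∇)v = 0`. -/
theorem stmt_10 (d : ℕ) (T : ℝ) (hT : 0 < T)
    (X : ℝ → ℝ → Fin d → ℝ) (b v : ℝ → (Fin d → ℝ) → Fin d → ℝ)
    (hX : ContDiff ℝ (⊤ : ℕ∞) (fun p : ℝ × ℝ => X p.1 p.2))
    (hb : ContDiff ℝ (⊤ : ℕ∞) (fun p : ℝ × (Fin d → ℝ) => b p.1 p.2))
    (hv : ContDiff ℝ (⊤ : ℕ∞) (fun p : ℝ × (Fin d → ℝ) => v p.1 p.2))
    (hheat : ∀ t ∈ Set.Icc (0:ℝ) T, ∀ (s : ℝ) (i : Fin d), deriv (fun τ => X τ s i) t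
      = deriv (fun σ => deriv (fun σ' => X t σ' i) σ) s)
    (hbX : ∀ t ∈ Set.Icc (0:ℝ) T, ∀ (s : ℝ) (i : Fin d),
      deriv (fun σ => X t σ i) s = b t (X t s) i)
    (hvX : ∀ t ∈ Set.Icc (0:ℝ) T, ∀ (s : ℝ) (i : Fin d),
      deriv (fun τ => X τ s i) t = v t (X t s) i) :
    ∀ t ∈ Set.Icc (0:ℝ) T, ∀ (s : ℝ) (i : Fin d),
      (v t (X t s) i = ∑ j, b t (X t s) j * pd j (fun y => b t y i) (X t s))
      ∧ deriv (fun τ => b τ (X t s) i) t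
          + ∑ j, v t (X t s) j * pd j (fun y => b t y i) (X t s)
          - ∑ j, b t (X t s) j * pd j (fun y => v t y i) (X t s) = 0 := by
  intro t ht s i
  have hle1 : (1 : WithTop ℕ∞) ≤ ((⊤:ℕ∞) : WithTop ℕ∞) := by exact_mod_cast le_top
  have hle2 : ((⊤:ℕ∞) : WithTop ℕ∞) + 1 ≤ ((⊤:ℕ∞) : WithTop ℕ∞) := by exact_mod_cast le_top
  -- basic smoothness facts
  have hXj : ∀ j, ContDiff ℝ (⊤:ℕ∞) (fun p : ℝ × ℝ => X p.1 p.2 j) :=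
    fun j => contDiff_pi.1 hX j
  have hbj : ∀ j, ContDiff ℝ (⊤:ℕ∞) (fun p : ℝ × (Fin d → ℝ) => b p.1 p.2 j) :=
    fun j => contDiff_pi.1 hb j
  have hvj : ∀ j, ContDiff ℝ (⊤:ℕ∞) (fun p : ℝ × (Fin d → ℝ) => v p.1 p.2 j) :=
    fun j => contDiff_pi.1 hv j
  -- spatial derivative of X at fixed t (any σ)
  have hXs : ∀ (σ : ℝ) (j : Fin d), HasDerivAt (fun σ' => X t σ' j) (b t (X t σ) j) σ := by
    intro σ j
    have hdiff : DifferentiableAt ℝ (fun σ' => X t σ' j) σ :=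
      (((hXj j).comp (contDiff_const.prodMk contDiff_id)).differentiable (by simp) σ)
    have h := hdiff.hasDerivAt
    rwa [hbX t ht σ j] at h
  -- time derivative of X at fixed s (at our t)
  have hXt : ∀ j, HasDerivAt (fun τ => X τ s j) (v t (X t s) j) t := by
    intro j
    have hdiff : DifferentiableAt ℝ (fun τ => X τ s j) t :=
      (((hXj j).comp (contDiff_id.prodMk contDiff_const)).differentiable (by simp) t)
    have h := hdiff.hasDerivAt
    rwa [hvX t ht s j] at h
  have hGb : ∀ i', Differentiable ℝ (fun y => b t y i') := fun i' =>
    ((hbj i').comp (contDiff_const.prodMk contDiff_id)).differentiable (by simp)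
  have hGv : ∀ i', Differentiable ℝ (fun y => v t y i') := fun i' =>
    ((hvj i').comp (contDiff_const.prodMk contDiff_id)).differentiable (by simp)
  constructor
  · -- Part 1
    have h4 : HasDerivAt (fun σ => b t (X t σ) i)
        (∑ j, b t (X t s) j * pd j (fun y => b t y i) (X t s)) s :=
      chain_deriv (fun y => b t y i) (fun σ => X t σ) _ s ((hGb i) _) (fun j => hXs s j)
    have h3 : (fun σ => deriv (fun σ' => X t σ' i) σ) = fun σ => b t (X t σ) i :=
      funext fun σ => hbX t ht σ i
    rw [← hvX t ht s i, hheat t ht s i, h3, h4.deriv]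
  · -- Part 2
    -- second derivative machinery for F(p) = X p.1 p.2 i
    have hF : ContDiff ℝ (⊤:ℕ∞) (fun p : ℝ × ℝ => X p.1 p.2 i) := hXj i
    have hFd : Differentiable ℝ (fun p : ℝ × ℝ => X p.1 p.2 i) := hF.differentiable (by simp)
    set f' := fderiv ℝ (fun p : ℝ × ℝ => X p.1 p.2 i) with hf'def
    have hf'c : ContDiff ℝ (⊤:ℕ∞) f' := hF.fderiv_right hle2
    have hf'at : ∀ p, HasFDerivAt (fun p : ℝ × ℝ => X p.1 p.2 i) (f' p) p :=
      fun p => (hFd p).hasFDerivAt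
    set f'' := fderiv ℝ f' (t, s) with hf''def
    have hf''at : HasFDerivAt f' f'' (t, s) := (hf'c.differentiable (by simp) (t, s)).hasFDerivAt
    have hsymm : f'' (1, 0) (0, 1) = f'' (0, 1) (1, 0) :=
      second_derivative_symmetric hf'at hf''at _ _
    -- spatial deriv as f' applied to (0,1), at every τ
    have hφval : ∀ τ, deriv (fun σ => X τ σ i) s = f' (τ, s) (0, 1) := by
      intro τ
      have hc : HasDerivAt (fun σ => ((τ, σ) : ℝ × ℝ)) ((0:ℝ), (1:ℝ)) s :=
        (hasDerivAt_const s τ).prodMk (hasDerivAt_id s)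
      exact ((hf'at (τ, s)).comp_hasDerivAt s hc).deriv
    -- time deriv as f' applied to (1,0), at every σ
    have hτval : ∀ σ, deriv (fun τ => X τ σ i) t = f' (t, σ) (1, 0) := by
      intro σ
      have hc : HasDerivAt (fun τ => ((τ, σ) : ℝ × ℝ)) ((1:ℝ), (0:ℝ)) t :=
        (hasDerivAt_id t).prodMk (hasDerivAt_const t σ)
      exact ((hf'at (t, σ)).comp_hasDerivAt t hc).deriv
    -- D1 : derivative in t of φ
    have hD1 : HasDerivAt (fun τ => f' (τ, s) (0, 1)) (f'' (1, 0) (0, 1)) t := by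
      have hc : HasDerivAt (fun τ => ((τ, s) : ℝ × ℝ)) ((1:ℝ), (0:ℝ)) t :=
        (hasDerivAt_id t).prodMk (hasDerivAt_const t s)
      have h := hf''at.comp_hasDerivAt t hc
      have h2 := h.clm_apply (hasDerivAt_const t ((0:ℝ), (1:ℝ)))
      simpa using h2
    -- D2 : derivative in s of time-derivative
    have hD2 : HasDerivAt (fun σ => f' (t, σ) (1, 0)) (f'' (0, 1) (1, 0)) s := by
      have hc : HasDerivAt (fun σ => ((t, σ) : ℝ × ℝ)) ((0:ℝ), (1:ℝ)) s :=
        (hasDerivAt_const s t).prodMk (hasDerivAt_id s)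
      have h := hf''at.comp_hasDerivAt s hc
      have h2 := h.clm_apply (hasDerivAt_const s ((1:ℝ), (0:ℝ)))
      simpa using h2
    -- D2 equals sum b^j ∂_j v^i
    have hvchain : HasDerivAt (fun σ => v t (X t σ) i)
        (∑ j, b t (X t s) j * pd j (fun y => v t y i) (X t s)) s :=
      chain_deriv (fun y => v t y i) (fun σ => X t σ) _ s ((hGv i) _) (fun j => hXs s j)
    have hD2' : f'' (0, 1) (1, 0) = ∑ j, b t (X t s) j * pd j (fun y => v t y i) (X t s) := by
      have hfun : (fun σ => f' (t, σ) (1, 0)) = fun σ => v t (X t σ) i := by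
        funext σ
        rw [← hτval σ, hvX t ht σ i]
      rw [← hD2.deriv, hfun, hvchain.deriv]
    -- φ and ψ
    set φ : ℝ → ℝ := fun τ => f' (τ, s) (0, 1) with hφdef
    set ψ : ℝ → ℝ := fun τ => b τ (X τ s) i with hψdef
    have hφc : ContDiff ℝ (⊤:ℕ∞) φ :=
      ContDiff.clm_apply (hf'c.comp (contDiff_id.prodMk contDiff_const)) contDiff_const
    have hXcurve : ContDiff ℝ (⊤:ℕ∞) (fun τ => X τ s) :=
      hX.comp (contDiff_id.prodMk contDiff_const)
    have hψc : ContDiff ℝ (⊤:ℕ∞) ψ :=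
      (hbj i).comp (contDiff_id.prodMk hXcurve)
    have hEq : Set.EqOn φ ψ (Set.Icc 0 T) := by
      intro τ hτ
      show f' (τ, s) (0, 1) = b τ (X τ s) i
      rw [← hφval τ, hbX τ hτ s i]
    have hEq' : Set.EqOn (deriv φ) (deriv ψ) (Set.Icc 0 T) := by
      have hIoo : Set.EqOn (deriv φ) (deriv ψ) (Set.Ioo 0 T) := by
        intro τ hτ
        have hmem : Set.Icc (0:ℝ) T ∈ nhds τ := Icc_mem_nhds hτ.1 hτ.2
        exact Filter.EventuallyEq.deriv_eq (Filter.eventuallyEq_of_mem hmem hEq)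
      have hcl := hIoo.closure (hφc.continuous_deriv hle1) (hψc.continuous_deriv hle1)
      rwa [closure_Ioo hT.ne] at hcl
    -- compute deriv ψ t via chain rule in (t, x)
    have hBd : Differentiable ℝ (fun p : ℝ × (Fin d → ℝ) => b p.1 p.2 i) :=
      (hbj i).differentiable (by simp)
    set FB := fderiv ℝ (fun p : ℝ × (Fin d → ℝ) => b p.1 p.2 i) (t, X t s) with hFBdef
    have hBat : HasFDerivAt (fun p : ℝ × (Fin d → ℝ) => b p.1 p.2 i) FB (t, X t s) :=
      (hBd (t, X t s)).hasFDerivAt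
    have hcurve : HasDerivAt (fun τ => ((τ, X τ s) : ℝ × (Fin d → ℝ))) ((1:ℝ), v t (X t s)) t :=
      (hasDerivAt_id t).prodMk (hasDerivAt_pi.2 hXt)
    have hmain : HasDerivAt ψ (FB (1, v t (X t s))) t :=
      hBat.comp_hasDerivAt (f := fun τ => ((τ, X τ s) : ℝ × (Fin d → ℝ))) t hcurve
    have hA : HasDerivAt (fun τ => b τ (X t s) i) (FB ((1:ℝ), (0 : Fin d → ℝ))) t :=
      hBat.comp_hasDerivAt (f := fun τ => ((τ, X t s) : ℝ × (Fin d → ℝ))) t ((hasDerivAt_id t).prodMk (hasDerivAt_const t (X t s)))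
    have hGat : HasFDerivAt (fun y => b t y i)
        (FB.comp (ContinuousLinearMap.inr ℝ ℝ (Fin d → ℝ))) (X t s) :=
      hBat.comp (X t s) (hasFDerivAt_prodMk_right t (X t s))
    have hsum : FB ((0:ℝ), v t (X t s)) = ∑ j, v t (X t s) j * pd j (fun y => b t y i) (X t s) := by
      have h := clm_sum (FB.comp (ContinuousLinearMap.inr ℝ ℝ (Fin d → ℝ))) (v t (X t s))
      simp only [ContinuousLinearMap.coe_comp', Function.comp_apply,
        ContinuousLinearMap.inr_apply] at h
      rw [h]
      refine Finset.sum_congr rfl fun j _ => ?_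
      congr 1
      show FB (0, Pi.single j 1) = pd j (fun y => b t y i) (X t s)
      rw [pd, hGat.fderiv]
      rfl
    have hsplit : FB ((1:ℝ), v t (X t s)) = FB ((1:ℝ), (0 : Fin d → ℝ)) + FB ((0:ℝ), v t (X t s)) := by
      rw [← map_add]
      norm_num
    have hψderiv : deriv ψ t
        = deriv (fun τ => b τ (X t s) i) t + ∑ j, v t (X t s) j * pd j (fun y => b t y i) (X t s) := by
      rw [hmain.deriv, hsplit, hA.deriv, hsum]
    have hφderiv : deriv φ t = f'' (1, 0) (0, 1) := hD1.deriv
    have hkey : deriv (fun τ => b τ (X t s) i) t + ∑ j, v t (X t s) j * pd j (fun y => b t y i) (X t s)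
        = ∑ j, b t (X t s) j * pd j (fun y => v t y i) (X t s) := by
      rw [← hψderiv, ← hEq' ht, hφderiv, hsymm, hD2']
    linarith [hkey]


end
end
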